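/- With the pseudorandom mapping watermark, defining Ŷ = g(X) with probability p_w and Ŷ = Y with probability 1 - p_w (selection Bernoulli independent of everything, and the uniform U defining g independent of (X,Y)), the marginal distribution of Ŷ equals the marginal distribution of Y. -/

import Mathlib

open MeasureTheory ProbabilityTheory

/-- The pseudorandom mapping watermark preserves the marginal distribution of Y. -/
theorem pseudorandom_watermark_marginal {Ω α : Type*} [MeasurableSpace Ω]
    [MeasurableSpace α]
    (μ : Measure Ω) [IsProbabilityMeasure μ]
    (n : ℕ) (y : Fin (n + 1) → ℝ)
    (hy0 : ∀ k, 0 ≤ y k) (hy1 : ∑ k, y k = 1)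
    (X : Ω → α) (Y : Ω → Fin (n + 1)) (U : Ω → ℝ) (B : Ω → Bool)
    (hXm : Measurable X) (hYm : Measurable Y) (hUm : Measurable U) (hBm : Measurable B)
    (hY : ∀ k, (μ {ω | Y ω = k}).toReal = y k)
    (hUrange : ∀ ω, 0 ≤ U ω ∧ U ω < 1)
    (hUunif : ∀ a b : ℝ, 0 ≤ a → a ≤ b → b ≤ 1 →
      (μ {ω | a ≤ U ω ∧ U ω < b}).toReal = b - a)
    (hUIndep : IndepFun (fun ω => (X ω, Y ω)) U μ)
    (p_w : ℝ) (hp0 : 0 < p_w) (hp1 : p_w < 1)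
    (hB : (μ {ω | B ω = false}).toReal = p_w)
    (hBIndep : IndepFun (fun ω => (X ω, Y ω, U ω)) B μ)
    (g : α → Ω → Fin (n + 1))
    (hg : ∀ (x : α) (ω : Ω) (k : Fin (n + 1)),
      g x ω = k ↔ (∑ i ∈ Finset.Iio k, y i) ≤ U ω ∧ U ω < (∑ i ∈ Finset.Iio k, y i) + y k)
    (Yhat : Ω → Fin (n + 1))
    (hYhat : ∀ ω, Yhat ω = if B ω = false then g (X ω) ω else Y ω) :
    ∀ k : Fin (n + 1), (μ {ω | Yhat ω = k}).toReal = (μ {ω | Y ω = k}).toReal := by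

  intro k
  set a : ℝ := ∑ i ∈ Finset.Iio k, y i with ha
  have ha0 : 0 ≤ a := Finset.sum_nonneg fun i _ => hy0 i
  have hab : a + y k ≤ 1 := by
    have hsub : ∑ i ∈ Finset.Iic k, y i ≤ ∑ i, y i :=
      Finset.sum_le_sum_of_subset_of_nonneg (Finset.subset_univ _) (fun i _ _ => hy0 i)
    rw [hy1] at hsub
    have : a + y k = ∑ i ∈ Finset.Iic k, y i := by
      rw [ha, ← Finset.Iio_insert, Finset.sum_insert (by simp)]
      ring
    linarith
  have hUB : IndepFun U B μ := by
    have := hBIndep.comp (φ := fun p : α × Fin (n+1) × ℝ => p.2.2) (ψ := id)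
      (measurable_snd.comp measurable_snd) measurable_id
    exact this
  have hYB : IndepFun Y B μ := by
    have := hBIndep.comp (φ := fun p : α × Fin (n+1) × ℝ => p.2.1) (ψ := id)
      (measurable_fst.comp measurable_snd) measurable_id
    exact this
  have hset : {ω | Yhat ω = k} =
      (U ⁻¹' Set.Ico a (a + y k) ∩ B ⁻¹' {false}) ∪ (Y ⁻¹' {k} ∩ B ⁻¹' {true}) := by
    ext ω
    simp only [Set.mem_setOf_eq, hYhat ω, Set.mem_union, Set.mem_inter_iff,
      Set.mem_preimage, Set.mem_Ico, Set.mem_singleton_iff]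
    cases hBω : B ω with
    | false => simp [hg (X ω) ω k, ← ha]
    | true => simp
  have hdisj : Disjoint (U ⁻¹' Set.Ico a (a + y k) ∩ B ⁻¹' {false})
      (Y ⁻¹' {k} ∩ B ⁻¹' {true}) := by
    rw [Set.disjoint_left]
    rintro ω ⟨-, h1⟩ ⟨-, h2⟩
    simp only [Set.mem_preimage, Set.mem_singleton_iff] at h1 h2
    rw [h1] at h2; exact Bool.false_ne_true h2
  have hmeas2 : MeasurableSet (Y ⁻¹' {k} ∩ B ⁻¹' {true}) :=
    (hYm (measurableSet_singleton k)).inter (hBm (measurableSet_singleton true))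
  have hU1 : (μ (U ⁻¹' Set.Ico a (a + y k))).toReal = y k := by
    have heq : U ⁻¹' Set.Ico a (a + y k) = {ω | a ≤ U ω ∧ U ω < a + y k} := by
      ext ω; simp [Set.mem_Ico]
    rw [heq, hUunif a (a + y k) ha0 (le_add_of_nonneg_right (hy0 k)) hab]
    ring
  have hBf : (μ (B ⁻¹' {false})).toReal = p_w := hB
  have hBt : (μ (B ⁻¹' {true})).toReal = 1 - p_w := by
    have hcompl : B ⁻¹' {true} = (B ⁻¹' {false})ᶜ := by
      ext ω; simp
    rw [hcompl, prob_compl_eq_one_sub (hBm (measurableSet_singleton false)),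
      ENNReal.toReal_sub_of_le prob_le_one ENNReal.one_ne_top, ENNReal.toReal_one, hBf]
  have hm1 : μ (U ⁻¹' Set.Ico a (a + y k) ∩ B ⁻¹' {false})
      = μ (U ⁻¹' Set.Ico a (a + y k)) * μ (B ⁻¹' {false}) :=
    hUB.measure_inter_preimage_eq_mul _ _ measurableSet_Ico (measurableSet_singleton false)
  have hm2 : μ (Y ⁻¹' {k} ∩ B ⁻¹' {true}) = μ (Y ⁻¹' {k}) * μ (B ⁻¹' {true}) :=
    hYB.measure_inter_preimage_eq_mul _ _ (measurableSet_singleton k) (measurableSet_singleton true)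
  have hYk : (μ (Y ⁻¹' {k})).toReal = y k := hY k
  rw [hY k, hset, measure_union hdisj hmeas2,
    ENNReal.toReal_add (measure_ne_top μ _) (measure_ne_top μ _), hm1, hm2,
    ENNReal.toReal_mul, ENNReal.toReal_mul, hU1, hBf, hBt, hYk]
  ring
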